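/- Fix M > 0 and a bounded function F : T² × T² → ℝ which is continuous outside the diagonal. The map μ ↦ ∫∫ F(x,y) μ(dx) μ(dy) is continuous on the set of non-negative, non-atomic Borel measures on T² with total mass at most M, endowed with the weak-* topology. -/

import Mathlib

open MeasureTheory

noncomputable section

instance : Fact (0 < 2 * Real.pi) := ⟨by positivity⟩

/-- The 2-torus. -/
abbrev Torus2 : Type := AddCircle (2 * Real.pi) × AddCircle (2 * Real.pi)

instance : BorelSpace (Torus2 × Torus2) := Prod.borelSpace

instance : MeasurableSingletonClass Torus2 := ⟨fun _ => isClosed_singleton.measurableSet⟩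

namespace DoubleIntAux

/-- Integration of a fixed continuous function is continuous on `FiniteMeasure`. -/
lemma cont_int (f : C(Torus2, ℝ)) :
    Continuous fun ν : FiniteMeasure Torus2 => ∫ x, f x ∂(ν : Measure Torus2) := by
  have := FiniteMeasure.continuous_integral_boundedContinuousFunction (X := Torus2)
    (BoundedContinuousFunction.mkOfCompact f)
  simpa using this

/-- Shorthand for the double integral functional. -/
def Phi (g : (Torus2 × Torus2) → ℝ) (ν : FiniteMeasure Torus2) : ℝ :=
  ∫ p, g p ∂((ν : Measure Torus2).prod (ν : Measure Torus2))

lemma integrable_cm (g : C(Torus2 × Torus2, ℝ)) (ν : FiniteMeasure Torus2) :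
    Integrable g ((ν : Measure Torus2).prod (ν : Measure Torus2)) := by
  have := (BoundedContinuousFunction.mkOfCompact g).integrable
    ((ν : Measure Torus2).prod (ν : Measure Torus2))
  exact this

/-- generator set for the tensor algebra. -/
def gens : Set C(Torus2 × Torus2, ℝ) :=
  (Set.range fun f : C(Torus2, ℝ) => f.comp ContinuousMap.fst) ∪
  (Set.range fun f : C(Torus2, ℝ) => f.comp ContinuousMap.snd)

lemma tensor_of_mem_closure {a : C(Torus2 × Torus2, ℝ)} (ha : a ∈ Submonoid.closure gens) :
    ∃ f g : C(Torus2, ℝ), ∀ p : Torus2 × Torus2, a p = f p.1 * g p.2 := by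
  induction ha using Submonoid.closure_induction with
  | mem x hx =>
    rcases hx with ⟨f, rfl⟩ | ⟨f, rfl⟩
    · exact ⟨f, 1, fun p => by simp⟩
    · exact ⟨1, f, fun p => by simp⟩
  | one => exact ⟨1, 1, fun p => by simp⟩
  | mul x y hx hy ihx ihy =>
    obtain ⟨f₁, g₁, h₁⟩ := ihx
    obtain ⟨f₂, g₂, h₂⟩ := ihy
    exact ⟨f₁ * f₂, g₁ * g₂, fun p => by simp [h₁ p, h₂ p]; ring⟩

lemma cont_Phi_of_adjoin {a : C(Torus2 × Torus2, ℝ)} (ha : a ∈ Algebra.adjoin ℝ gens) :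
    Continuous (Phi a) := by
  have ha' : a ∈ Submodule.span ℝ (Submonoid.closure gens : Set C(Torus2 × Torus2, ℝ)) := by
    rw [← Algebra.adjoin_eq_span]; exact ha
  clear ha
  induction ha' using Submodule.span_induction with
  | mem x hx =>
    obtain ⟨f, g, hfg⟩ := tensor_of_mem_closure hx
    have key : Phi x = fun ν : FiniteMeasure Torus2 =>
        (∫ z, f z ∂(ν : Measure Torus2)) * ∫ z, g z ∂(ν : Measure Torus2) := by
      funext ν
      rw [Phi, ← integral_prod_mul (μ := (ν : Measure Torus2)) (ν := (ν : Measure Torus2))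
        (f := fun z => f z) (g := fun z => g z)]
      exact congrArg _ (funext fun p => hfg p)
    rw [key]
    exact (cont_int f).mul (cont_int g)
  | zero =>
    have : Phi (0 : C(Torus2 × Torus2, ℝ)) = fun _ => 0 := by
      funext ν; simp [Phi]
    rw [this]; exact continuous_const
  | add x y hx hy ihx ihy =>
    have : Phi ⇑(x + y) = fun ν => Phi x ν + Phi y ν := by
      funext ν
      simp only [Phi, ContinuousMap.coe_add, Pi.add_apply]
      exact integral_add (integrable_cm x ν) (integrable_cm y ν)
    rw [this]; exact ihx.add ihy
  | smul c x hx ihx =>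
    have : Phi ⇑(c • x) = fun ν => c * Phi x ν := by
      funext ν
      simp only [Phi, ContinuousMap.coe_smul, Pi.smul_apply, smul_eq_mul]
      exact integral_const_mul c _
    rw [this]; exact continuous_const.mul ihx

lemma adjoin_separates : (Algebra.adjoin ℝ gens).SeparatesPoints := by
  intro p q hpq
  have h : p.1 ≠ q.1 ∨ p.2 ≠ q.2 := by
    by_contra h; push_neg at h; exact hpq (Prod.ext h.1 h.2)
  rcases h with h | h
  · refine ⟨_, ⟨(⟨fun z => dist z q.1, Continuous.dist continuous_id continuous_const⟩ :
      C(Torus2, ℝ)).comp ContinuousMap.fst,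
      Algebra.subset_adjoin (Or.inl ⟨_, rfl⟩), rfl⟩, ?_⟩
    simpa using h
  · refine ⟨_, ⟨(⟨fun z => dist z q.2, Continuous.dist continuous_id continuous_const⟩ :
      C(Torus2, ℝ)).comp ContinuousMap.snd,
      Algebra.subset_adjoin (Or.inr ⟨_, rfl⟩), rfl⟩, ?_⟩
    simpa using h

lemma exists_approx (g : C(Torus2 × Torus2, ℝ)) {ε : ℝ} (hε : 0 < ε) :
    ∃ a, a ∈ Algebra.adjoin ℝ gens ∧ dist g a < ε := by
  have htop := ContinuousMap.subalgebra_topologicalClosure_eq_top_of_separatesPoints _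
    adjoin_separates
  have hg : g ∈ closure ((Algebra.adjoin ℝ gens :
      Subalgebra ℝ C(Torus2 × Torus2, ℝ)) : Set C(Torus2 × Torus2, ℝ)) := by
    have : g ∈ (Algebra.adjoin ℝ gens).topologicalClosure := by rw [htop]; trivial
    exact this
  rcases Metric.mem_closure_iff.1 hg ε hε with ⟨a, ha, hd⟩
  exact ⟨a, ha, hd⟩

lemma mass_sq (ν : FiniteMeasure Torus2) :
    (((ν : Measure Torus2).prod (ν : Measure Torus2)) Set.univ).toReal = (ν.mass : ℝ) ^ 2 := by
  rw [← Set.univ_prod_univ, Measure.prod_prod, ← FiniteMeasure.ennreal_mass, ← ENNReal.coe_mul,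
    ENNReal.coe_toReal]
  push_cast; ring

lemma cont_Phi (g : C(Torus2 × Torus2, ℝ)) : Continuous (Phi ⇑g) := by
  rw [continuous_iff_continuousAt]
  intro μ₀
  rw [ContinuousAt, Metric.tendsto_nhds]
  intro ε hε
  set K : ℝ := (μ₀.mass : ℝ) + 1 with hKdef
  have hK1 : (1 : ℝ) ≤ K := by
    have : (0 : ℝ) ≤ (μ₀.mass : ℝ) := (μ₀.mass).coe_nonneg
    linarith
  have hK0 : (0 : ℝ) < K := lt_of_lt_of_le one_pos hK1
  obtain ⟨a, haA, hda⟩ := exists_approx g (show (0:ℝ) < ε / (3 * K ^ 2) by positivity)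
  have hmass : ∀ᶠ ν : FiniteMeasure Torus2 in nhds μ₀, (ν.mass : ℝ) < K := by
    have hcont : Continuous fun ν : FiniteMeasure Torus2 => (ν.mass : ℝ) :=
      NNReal.continuous_coe.comp FiniteMeasure.continuous_mass
    exact (hcont.tendsto μ₀).eventually_lt_const (lt_add_one _)
  have key : ∀ ν : FiniteMeasure Torus2, (ν.mass : ℝ) < K →
      dist (Phi ⇑g ν) (Phi ⇑a ν) ≤ ε / 3 := by
    intro ν hν
    have hsub : Phi ⇑g ν - Phi ⇑a ν
        = ∫ p, (g p - a p) ∂((ν : Measure Torus2).prod (ν : Measure Torus2)) :=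
      (integral_sub (integrable_cm g ν) (integrable_cm a ν)).symm
    have hbd : ‖∫ p, (g p - a p) ∂((ν : Measure Torus2).prod (ν : Measure Torus2))‖
        ≤ dist g a * (((ν : Measure Torus2).prod (ν : Measure Torus2)) Set.univ).toReal := by
      apply norm_integral_le_of_norm_le_const
      filter_upwards with p
      have := ContinuousMap.dist_apply_le_dist (f := g) (g := a) p
      simpa [Real.dist_eq, Real.norm_eq_abs] using this
    rw [Real.dist_eq, hsub]
    rw [mass_sq] at hbd
    have h1 : dist g a * (ν.mass : ℝ) ^ 2 ≤ (ε / (3 * K ^ 2)) * K ^ 2 := by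
      have hm0 : (0 : ℝ) ≤ (ν.mass : ℝ) := (ν.mass).coe_nonneg
      have hmK : (ν.mass : ℝ) ^ 2 ≤ K ^ 2 := by nlinarith
      calc dist g a * (ν.mass : ℝ) ^ 2 ≤ dist g a * K ^ 2 :=
            mul_le_mul_of_nonneg_left hmK dist_nonneg
        _ ≤ (ε / (3 * K ^ 2)) * K ^ 2 :=
            mul_le_mul_of_nonneg_right hda.le (by positivity)
    have h2 : (ε / (3 * K ^ 2)) * K ^ 2 = ε / 3 := by field_simp
    calc |∫ p, (g p - a p) ∂((ν : Measure Torus2).prod (ν : Measure Torus2))|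
        ≤ dist g a * (ν.mass : ℝ) ^ 2 := hbd
      _ ≤ ε / 3 := by rw [← h2]; exact h1
  have hPa : ∀ᶠ ν : FiniteMeasure Torus2 in nhds μ₀,
      dist (Phi ⇑a ν) (Phi ⇑a μ₀) < ε / 3 := by
    have := (cont_Phi_of_adjoin haA).tendsto μ₀
    exact Metric.tendsto_nhds.1 this (ε / 3) (by positivity)
  filter_upwards [hmass, hPa] with ν h1 h2
  have hμ₀ : (μ₀.mass : ℝ) < K := lt_add_one _
  have t4 := dist_triangle4 (Phi ⇑g ν) (Phi ⇑a ν) (Phi ⇑a μ₀) (Phi ⇑g μ₀)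
  have e1 := key ν h1
  have e3 := key μ₀ hμ₀
  rw [dist_comm (Phi ⇑a μ₀)] at t4
  linarith


lemma diag_null (μ : FiniteMeasure Torus2) (h : ∀ x : Torus2, (μ : Measure Torus2) {x} = 0) :
    ((μ : Measure Torus2).prod (μ : Measure Torus2)) {p : Torus2 × Torus2 | p.1 = p.2} = 0 := by
  have hd : MeasurableSet {p : Torus2 × Torus2 | p.1 = p.2} :=
    measurableSet_eq_fun measurable_fst measurable_snd
  rw [Measure.prod_apply hd]
  have hx : ∀ x : Torus2,
      (μ : Measure Torus2) (Prod.mk x ⁻¹' {p : Torus2 × Torus2 | p.1 = p.2}) = 0 := by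
    intro x
    have : (Prod.mk x ⁻¹' {p : Torus2 × Torus2 | p.1 = p.2}) = {x} := by
      ext y; simp [eq_comm]
    rw [this]; exact h x
  simp only [hx, lintegral_zero]

end DoubleIntAux

open DoubleIntAux in
/-- **Continuity of the quadratic form `μ ↦ ∫∫ F dμ dμ` on non-negative non-atomic
measures of mass at most `M`**, for `F` bounded Borel on `T² × T²` and continuous outside
the diagonal; the space of finite measures carries the weak-* (weak convergence) topology. -/
theorem continuousOn_double_integral_nonatomic
    (M : ℝ) (hM : 0 < M)
    (F : Torus2 × Torus2 → ℝ) (hF_meas : Measurable F)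
    (hF_bdd : ∃ C, ∀ p, |F p| ≤ C)
    (hF_cont : ContinuousOn F {p : Torus2 × Torus2 | p.1 ≠ p.2}) :
    ContinuousOn
      (fun μ : FiniteMeasure Torus2 =>
        ∫ p, F p ∂((μ : Measure Torus2).prod (μ : Measure Torus2)))
      {μ : FiniteMeasure Torus2 |
        (μ : Measure Torus2) Set.univ ≤ ENNReal.ofReal M ∧
        ∀ x : Torus2, (μ : Measure Torus2) {x} = 0} := by
  intro μ hμ
  obtain ⟨hμM, hna⟩ := hμ
  apply ContinuousAt.continuousWithinAt
  obtain ⟨C, hC⟩ := hF_bdd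
  set C' : ℝ := C + 1 with hC'def
  have hC'pos : 0 < C' := by
    have h0 := hC ((0, 0), (0, 0))
    have := abs_nonneg (F ((0, 0), (0, 0)))
    simp only [hC'def]; linarith
  have hFC' : ∀ p, |F p| ≤ C' := fun p => (hC p).trans (by simp [hC'def])
  have hFint : ∀ ν : FiniteMeasure Torus2,
      Integrable F ((ν : Measure Torus2).prod (ν : Measure Torus2)) := by
    intro ν
    exact (integrable_const C').mono' hF_meas.aestronglyMeasurable
      (Filter.Eventually.of_forall fun p => by
        simpa [Real.norm_eq_abs] using hFC' p)
  show ContinuousAt (Phi F) μ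
  rw [ContinuousAt, Metric.tendsto_nhds]
  intro ε hε
  set δ : ℝ := ε / (36 * C') with hδdef
  have hδpos : 0 < δ := by positivity
  -- a small open neighborhood of the diagonal
  have hdiag := diag_null μ hna
  have hlt : ((μ : Measure Torus2).prod (μ : Measure Torus2)) {p : Torus2 × Torus2 | p.1 = p.2}
      < ENNReal.ofReal δ := by
    rw [hdiag]; exact ENNReal.ofReal_pos.2 hδpos
  obtain ⟨U, hUsub, hUopen, hUlt⟩ :=
    Set.exists_isOpen_lt_of_lt {p : Torus2 × Torus2 | p.1 = p.2} _ hlt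
  -- Urysohn function
  obtain ⟨h, h0, h1, h01⟩ := exists_continuous_zero_one_of_isClosed
    (X := Torus2 × Torus2) hUopen.isClosed_compl
    (isClosed_eq continuous_fst continuous_snd)
    (Set.disjoint_left.2 fun p hpU hpd => hpU (hUsub hpd))
  set V : Set (Torus2 × Torus2) := {p | 1 / 2 < h p} with hVdef
  have hVopen : IsOpen V := isOpen_lt continuous_const h.continuous
  have hdiagV : ∀ p : Torus2 × Torus2, p.1 = p.2 → p ∈ V := by
    intro p hp
    have := h1 (show p ∈ {p : Torus2 × Torus2 | p.1 = p.2} from hp)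
    simp only [hVdef, Set.mem_setOf_eq, this, Pi.one_apply]
    norm_num
  -- Tietze extension of F from Vᶜ
  have hVc_closed : IsClosed Vᶜ := hVopen.isClosed_compl
  have hVcsub : Vᶜ ⊆ {p : Torus2 × Torus2 | p.1 ≠ p.2} := fun p hp hpe => hp (hdiagV p hpe)
  have hFcontV : ContinuousOn F Vᶜ := hF_cont.mono hVcsub
  obtain ⟨G₀, hG₀⟩ := ContinuousMap.exists_restrict_eq (Y := ℝ) hVc_closed
    ⟨Vᶜ.restrict F, hFcontV.restrict⟩
  have hG₀eq : ∀ p ∈ Vᶜ, G₀ p = F p := by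
    intro p hp
    exact DFunLike.congr_fun hG₀ (⟨p, hp⟩ : (Vᶜ : Set (Torus2 × Torus2)))
  set G : C(Torus2 × Torus2, ℝ) :=
    ⟨fun p => max (-C') (min C' (G₀ p)),
      (continuous_const.max (continuous_const.min G₀.continuous))⟩ with hGdef
  have hGbd : ∀ p, |G p| ≤ C' := by
    intro p
    rw [abs_le]
    constructor
    · exact le_max_left _ _
    · exact max_le (by linarith) (min_le_left _ _)
  have hGeq : ∀ p ∈ Vᶜ, G p = F p := by
    intro p hp
    have hF := abs_le.1 (hFC' p)
    simp only [hGdef, ContinuousMap.coe_mk, hG₀eq p hp]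
    rw [min_eq_right hF.2, max_eq_right hF.1]
  have hFG : ∀ p, |F p - G p| ≤ 4 * C' * h p := by
    intro p
    by_cases hp : p ∈ V
    · have h2 : (1 : ℝ) / 2 < h p := hp
      have hb : |F p - G p| ≤ 2 * C' :=
        (abs_sub _ _).trans (by linarith [hFC' p, hGbd p])
      nlinarith
    · rw [hGeq p hp]
      simp only [sub_self, abs_zero]
      have := (h01 p).1
      positivity
  -- comparison of the quadratic forms
  have hcomp : ∀ ν : FiniteMeasure Torus2,
      |Phi F ν - Phi ⇑G ν| ≤ 4 * C' * Phi ⇑h ν := by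
    intro ν
    have hsub : Phi F ν - Phi ⇑G ν
        = ∫ p, (F p - G p) ∂((ν : Measure Torus2).prod (ν : Measure Torus2)) :=
      (integral_sub (hFint ν) (integrable_cm G ν)).symm
    rw [hsub]
    have step1 : |∫ p, (F p - G p) ∂((ν : Measure Torus2).prod (ν : Measure Torus2))|
        ≤ ∫ p, |F p - G p| ∂((ν : Measure Torus2).prod (ν : Measure Torus2)) :=
      by simpa [Real.norm_eq_abs] using
        norm_integral_le_integral_norm (μ := (ν : Measure Torus2).prod (ν : Measure Torus2))
          (fun p => F p - G p)
    have hintsub : Integrable (fun p => |F p - G p|)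
        ((ν : Measure Torus2).prod (ν : Measure Torus2)) :=
      ((hFint ν).sub (integrable_cm G ν)).abs
    have hinth : Integrable (fun p => 4 * C' * h p)
        ((ν : Measure Torus2).prod (ν : Measure Torus2)) :=
      (integrable_cm h ν).const_mul _
    have step2 : ∫ p, |F p - G p| ∂((ν : Measure Torus2).prod (ν : Measure Torus2))
        ≤ ∫ p, 4 * C' * h p ∂((ν : Measure Torus2).prod (ν : Measure Torus2)) :=
      integral_mono hintsub hinth fun p => hFG p
    have step3 : ∫ p, 4 * C' * h p ∂((ν : Measure Torus2).prod (ν : Measure Torus2))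
        = 4 * C' * Phi ⇑h ν := integral_const_mul _ _
    linarith
  -- bound `Phi h μ ≤ δ`
  have hhμ : Phi ⇑h μ ≤ δ := by
    have hle : ∀ p, h p ≤ Set.indicator U (fun _ => (1 : ℝ)) p := by
      intro p
      by_cases hp : p ∈ U
      · rw [Set.indicator_of_mem hp]; exact (h01 p).2
      · rw [Set.indicator_of_notMem hp]
        have := h0 (show p ∈ Uᶜ from hp)
        simp [this]
    have hI : Integrable (Set.indicator U (fun _ => (1 : ℝ)))
        ((μ : Measure Torus2).prod (μ : Measure Torus2)) :=
      (integrable_const (1 : ℝ)).indicator hUopen.measurableSet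
    have hmono : Phi ⇑h μ
        ≤ ∫ p, Set.indicator U (fun _ => (1 : ℝ)) p
            ∂((μ : Measure Torus2).prod (μ : Measure Torus2)) :=
      integral_mono (integrable_cm h μ) hI hle
    rw [integral_indicator_const (1 : ℝ) hUopen.measurableSet] at hmono
    have hUr : (((μ : Measure Torus2).prod (μ : Measure Torus2)) U).toReal ≤ δ :=
      ENNReal.toReal_le_of_le_ofReal hδpos.le hUlt.le
    simpa using hmono.trans (by simpa [Measure.real] using hUr)
  have hh0 : ∀ ν : FiniteMeasure Torus2, 0 ≤ Phi ⇑h ν := by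
    intro ν
    exact integral_nonneg fun p => (h01 p).1
  -- eventual bounds
  have Eh : ∀ᶠ ν : FiniteMeasure Torus2 in nhds μ, Phi ⇑h ν < Phi ⇑h μ + δ :=
    ((cont_Phi h).tendsto μ).eventually_lt_const (lt_add_of_pos_right _ hδpos)
  have EG : ∀ᶠ ν : FiniteMeasure Torus2 in nhds μ,
      dist (Phi ⇑G ν) (Phi ⇑G μ) < ε / 3 :=
    Metric.tendsto_nhds.1 ((cont_Phi G).tendsto μ) (ε / 3) (by positivity)
  filter_upwards [Eh, EG] with ν hν1 hν2
  rw [Real.dist_eq]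
  have b1 := hcomp ν
  have b2 := hcomp μ
  have hhν : Phi ⇑h ν ≤ 2 * δ := by linarith
  have m1 : 4 * C' * Phi ⇑h ν ≤ 4 * C' * (2 * δ) :=
    mul_le_mul_of_nonneg_left hhν (by positivity)
  have m2 : 4 * C' * Phi ⇑h μ ≤ 4 * C' * δ :=
    mul_le_mul_of_nonneg_left hhμ (by positivity)
  have hd2 : |Phi ⇑G ν - Phi ⇑G μ| < ε / 3 := by rwa [Real.dist_eq] at hν2
  have tri : |Phi F ν - Phi F μ|
      ≤ |Phi F ν - Phi ⇑G ν| + |Phi ⇑G ν - Phi ⇑G μ| + |Phi ⇑G μ - Phi F μ| := by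
    calc |Phi F ν - Phi F μ| ≤ |Phi F ν - Phi ⇑G μ| + |Phi ⇑G μ - Phi F μ| :=
          abs_sub_le _ _ _
      _ ≤ |Phi F ν - Phi ⇑G ν| + |Phi ⇑G ν - Phi ⇑G μ| + |Phi ⇑G μ - Phi F μ| := by
          have := abs_sub_le (Phi F ν) (Phi ⇑G ν) (Phi ⇑G μ)
          linarith
  have habs : |Phi ⇑G μ - Phi F μ| = |Phi F μ - Phi ⇑G μ| := abs_sub_comm _ _
  have hsum : 4 * C' * (2 * δ) + 4 * C' * δ = ε / 3 := by
    rw [hδdef]; field_simp; ring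
  nlinarith [tri, b1, b2, hd2, m1, m2, hsum, habs, hε]


end
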